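/- Let k₁ and k₂ be divisors of n, identify F_{2^{k₁}} and F_{2^{k₂}} with subfields of F_{2^n}, and let S = F_{2^{k₁}} ∪ F_{2^{k₂}}. Then for any x, y ∈ S with x + y ∉ S and y ≠ 1, we have δ_S(y^2/(1+y)) ≠ δ_S(x^2 + x·y), where δ_S is the characteristic function of S. -/

import Mathlib

open scoped Classical

private lemma char_two_of_card {F : Type*} [Field F] [Fintype F] {n : ℕ}
    (hcard : Fintype.card F = 2 ^ n) : CharP F 2 := by
  have h0 : ((Fintype.card F : ℕ) : F) = 0 := FiniteField.cast_card_eq_zero F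
  rw [hcard] at h0
  push_cast at h0
  have hn : n ≠ 0 := by
    rintro rfl
    rw [pow_zero] at hcard
    exact absurd hcard (Fintype.one_lt_card.ne')
  have h2 : (2 : F) = 0 := pow_eq_zero_iff hn |>.mp h0
  exact CharTwo.of_one_ne_zero_of_two_eq_zero one_ne_zero h2

private lemma pow_fix {F : Type*} [Field F] {q m : ℕ} {a : F}
    (ha : a ^ q = a) : (a ^ m) ^ q = a ^ m := by
  rw [← pow_mul, mul_comm, pow_mul, ha]

private lemma key {F : Type*} [Field F] [CharP F 2] {x y : F} {q r : ℕ}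
    (hx : x ^ 2 ^ q = x) (hy : y ^ 2 ^ r = y)
    (hp : (x ^ 2 + x * y) ^ 2 ^ r = x ^ 2 + x * y) :
    (x + y) ^ 2 ^ q = x + y ∨ (x + y) ^ 2 ^ r = x + y := by
  set s : F := x ^ 2 ^ r with hs
  have hexp : s ^ 2 + s * y = x ^ 2 + x * y := by
    have h := hp
    rw [add_pow_char_pow, mul_pow, hy] at h
    calc s ^ 2 + s * y = (x ^ 2) ^ 2 ^ r + x ^ 2 ^ r * y := by
          rw [hs, ← pow_mul, ← pow_mul, mul_comm (2 ^ r) 2]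
    _ = x ^ 2 + x * y := h
  have hfact : (s + x) * (s + x + y) = 0 := by
    calc (s + x) * (s + x + y)
        = (s ^ 2 + s * y) + (x ^ 2 + x * y) + 2 * (s * x) := by ring
      _ = (x ^ 2 + x * y) + (x ^ 2 + x * y) + 0 * (s * x) := by
          rw [hexp, CharTwo.two_eq_zero (R := F)]
      _ = 0 := by rw [CharTwo.add_self_eq_zero]; ring
  rcases mul_eq_zero.mp hfact with h0 | h0
  · -- s = x, so x ∈ K_r, hence x + y ∈ K_r
    have hsx : s = x := by
      have := CharTwo.neg_eq (R := F) x ▸ eq_neg_of_add_eq_zero_left h0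
      exact this
    right
    rw [add_pow_char_pow, ← hs, hsx, hy]
  · -- x + y = s = x ^ 2 ^ r
    have hxy : x + y = s := by
      have h0' : s + (x + y) = 0 := by rw [← add_assoc]; exact h0
      have := CharTwo.neg_eq (R := F) s ▸ eq_neg_of_add_eq_zero_right h0'
      exact this
    left
    rw [hxy, hs, ← pow_mul, mul_comm (2 ^ r) (2 ^ q), pow_mul, hx]

private lemma main_aux {F : Type*} [Field F] [CharP F 2] {x y : F} {q r : ℕ}
    (hx : x ^ 2 ^ q = x ∨ x ^ 2 ^ r = x) (hy : y ^ 2 ^ q = y ∨ y ^ 2 ^ r = y)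
    (hp : (x ^ 2 + x * y) ^ 2 ^ r = x ^ 2 + x * y) :
    (x + y) ^ 2 ^ q = x + y ∨ (x + y) ^ 2 ^ r = x + y := by
  rcases hy with hyq | hyr
  · rcases hx with hxq | hxr
    · left; rw [add_pow_char_pow, hxq, hyq]
    · by_cases hx0 : x = 0
      · left; rw [hx0, zero_add, hyq]
      · right
        have hrepr : x + y = (x ^ 2 + x * y) / x := by field_simp
        rw [hrepr, div_pow, hp, hxr]
  · rcases hx with hxq | hxr
    · exact key hxq hyr hp
    · rcases key hxr hyr hp with h | h
      · right; exact h
      · right; exact h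

theorem stmt5 {F : Type*} [Field F] [Fintype F] {n k₁ k₂ : ℕ}
    (hcard : Fintype.card F = 2 ^ n) (hk₁ : k₁ ∣ n) (hk₂ : k₂ ∣ n)
    (hk₁0 : 0 < k₁) (hk₂0 : 0 < k₂)
    (S : Set F)
    (hS : S = {z : F | z ^ 2 ^ k₁ = z} ∪ {z : F | z ^ 2 ^ k₂ = z})
    (x y : F) (hx : x ∈ S) (hy : y ∈ S) (hxy : x + y ∉ S) (hy1 : y ≠ 1) :
    (if y ^ 2 / (1 + y) ∈ S then (1 : F) else 0) ≠
      (if x ^ 2 + x * y ∈ S then (1 : F) else 0) := by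
  haveI : CharP F 2 := char_two_of_card hcard
  subst hS
  have hone : ∀ k : ℕ, (1 : F) ^ 2 ^ k = 1 := fun k => one_pow _
  -- first membership always holds
  have goal1 : y ^ 2 / (1 + y) ∈
      {z : F | z ^ 2 ^ k₁ = z} ∪ {z : F | z ^ 2 ^ k₂ = z} := by
    rcases hy with h | h
    · left
      show (y ^ 2 / (1 + y)) ^ 2 ^ k₁ = y ^ 2 / (1 + y)
      rw [div_pow, pow_fix h, add_pow_char_pow, one_pow, h]
    · right
      show (y ^ 2 / (1 + y)) ^ 2 ^ k₂ = y ^ 2 / (1 + y)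
      rw [div_pow, pow_fix h, add_pow_char_pow, one_pow, h]
  have goal2 : x ^ 2 + x * y ∉
      {z : F | z ^ 2 ^ k₁ = z} ∪ {z : F | z ^ 2 ^ k₂ = z} := by
    intro hp
    apply hxy
    rcases hp with hp | hp
    · rcases main_aux (q := k₂) (r := k₁) hx.symm hy.symm hp with h | h
      · right; exact h
      · left; exact h
    · exact main_aux (q := k₁) (r := k₂) hx hy hp
  rw [if_pos goal1, if_neg goal2]
  exact one_ne_zero
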